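/- Let q be a prime power and n ≥ 1. The number of F_{q²}-rational points of a non-degenerate Hermitian variety U_n in P^n, i.e. the projective zero set of x_0^{q+1} + x_1^{q+1} + ... + x_n^{q+1}, equals (q^n - (-1)^n)(q^{n+1} - (-1)^{n+1})/(q² - 1). -/

import Mathlib

open Finset Polynomial

set_option linter.unusedSectionVars false
namespace HermAux

/-- The pair `(N m, M m)` where `N m` counts solutions of `∑ xᵢ^{q+1} = 0` in `K^m`
and `M m` counts solutions of `∑ xᵢ^{q+1} = c` for a fixed nonzero `c` in the base field. -/
def NM (q : ℚ) : ℕ → ℚ × ℚ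
  | 0 => (1, 0)
  | m + 1 => ((NM q m).1 + (q ^ 2 - 1) * (NM q m).2,
      (q + 1) * (NM q m).1 + (q ^ 2 - q - 1) * (NM q m).2)

lemma NM_closed (q : ℚ) (m : ℕ) :
    q * (NM q m).1 = q ^ (2 * m) + (-1) ^ m * (q - 1) * q ^ m ∧
      q * (NM q m).2 = q ^ (2 * m) - (-1) ^ m * q ^ m := by
  induction m with
  | zero => norm_num [NM]
  | succ m ih =>
    obtain ⟨h1, h2⟩ := ih
    constructor
    · have h : q * (NM q (m + 1)).1
          = q * (NM q m).1 + (q ^ 2 - 1) * (q * (NM q m).2) := by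
        simp only [NM]; ring
      rw [h, h1, h2]; ring
    · have h : q * (NM q (m + 1)).2
          = (q + 1) * (q * (NM q m).1) + (q ^ 2 - q - 1) * (q * (NM q m).2) := by
        simp only [NM]; ring
      rw [h, h1, h2]; ring

variable {K : Type} [Field K] [Fintype K] {q : ℕ}

/-- Frobenius-type additivity of `x ↦ x ^ q`. -/
lemma frob_add (hq : IsPrimePow q) (hK : Fintype.card K = q ^ 2) (x y : K) :
    (x + y) ^ q = x ^ q + y ^ q := by
  obtain ⟨p, k, hp, hk, rfl⟩ := hq
  have hp' : p.Prime := hp.nat_prime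
  obtain ⟨p', hc⟩ := CharP.exists K
  haveI := hc
  have hp'' : p'.Prime := CharP.char_is_prime K p'
  obtain ⟨m, -, hm⟩ := FiniteField.card K p'
  have hdvd : p' ∣ p ^ (k * 2) := by
    have h1 : p' ∣ p' ^ (m : ℕ) := dvd_pow_self p' m.ne_zero
    rw [← hm, hK, ← pow_mul] at h1
    exact h1
  have : p' = p := by
    have := hp''.dvd_of_dvd_pow hdvd
    exact (Nat.prime_dvd_prime_iff_eq hp'' hp').mp this
  subst this
  haveI : Fact p'.Prime := ⟨hp''⟩
  exact add_pow_char_pow x y p' k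

lemma frob_sub (hfrob : ∀ x y : K, (x + y) ^ q = x ^ q + y ^ q) (hq1 : 1 ≤ q) (x y : K) :
    (x - y) ^ q = x ^ q - y ^ q := by
  have h0 : (0 : K) ^ q = 0 := zero_pow (by omega)
  have hneg : (-y) ^ q = -(y ^ q) := by
    have := hfrob y (-y)
    rw [add_neg_cancel, h0] at this
    exact eq_neg_of_add_eq_zero_right this.symm
  rw [sub_eq_add_neg, hfrob, hneg, sub_eq_add_neg]


section Units

lemma ncard_filter {A : Type} [Fintype A] (p : A → Prop) [DecidablePred p] :
    Nat.card {x // p x} = #(univ.filter p) := by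
  rw [Nat.card_eq_fintype_card, Fintype.card_subtype]

lemma card_units' (hK : Fintype.card K = q ^ 2) : Nat.card Kˣ = q ^ 2 - 1 := by
  rw [Nat.card_units, Nat.card_eq_fintype_card, hK]

lemma mul_id (hq2 : 2 ≤ q) : (q + 1) * (q - 1) = q ^ 2 - 1 := by
  obtain ⟨r, rfl⟩ : ∃ r, q = r + 2 := ⟨q - 2, by omega⟩
  have h : (r + 2) ^ 2 = (r + 2 + 1) * (r + 2 - 1) + 1 := by
    have h1 : r + 2 - 1 = r + 1 := by omega
    rw [h1]; ring
  omega

/-- The group-theoretic core: sizes of kernel and range of `x ↦ x^{q+1}` on `Kˣ`. -/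
lemma key_units (hq2 : 2 ≤ q) (hK : Fintype.card K = q ^ 2) :
    Nat.card {x : K // x ^ (q + 1) = 1} = q + 1 ∧
      Nat.card {a : K // a ≠ 0 ∧ a ^ q = a} = q - 1 ∧
      ∀ a : K, a ≠ 0 → a ^ q = a → ∃ x : K, x ^ (q + 1) = a := by
  classical
  set φ : Kˣ →* Kˣ := powMonoidHom (q + 1) with hφ
  have hcard : Nat.card Kˣ = q ^ 2 - 1 := card_units' hK
  have hmul : (q + 1) * (q - 1) = q ^ 2 - 1 := mul_id hq2
  have hq2sq : 4 ≤ q ^ 2 := by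
    calc 4 = 2 ^ 2 := by norm_num
    _ ≤ q ^ 2 := Nat.pow_le_pow_left hq2 2
  -- the kernel as a subtype of `Kˣ`
  have hker_card : Nat.card φ.ker
      = #(univ.filter (fun g : Kˣ => g ^ (q + 1) = 1)) := by
    rw [show Nat.card φ.ker = Nat.card {g : Kˣ // g ^ (q + 1) = 1} from
      Nat.card_congr (Equiv.subtypeEquivRight (fun g => by
        simp [hφ, MonoidHom.mem_ker, powMonoidHom_apply]))]
    exact ncard_filter _
  have hker_le : Nat.card φ.ker ≤ q + 1 := by
    rw [hker_card]
    calc #(univ.filter (fun g : Kˣ => g ^ (q + 1) = 1))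
        ≤ Multiset.card (nthRoots (q + 1) ((Units.coeHom K) 1)) :=
          card_nthRoots_subgroup_units (Units.coeHom K) (fun _ _ h => Units.ext h) (by omega) 1
      _ ≤ q + 1 := by rw [map_one]; exact card_nthRoots _ _
  -- elements of the range are `(q-1)`-st roots of unity
  have hrange_sub : ∀ a : Kˣ, a ∈ φ.range → a ^ (q - 1) = 1 := by
    rintro a ⟨x, rfl⟩
    have hx : x ^ Fintype.card Kˣ = 1 := pow_card_eq_one
    rw [Fintype.card_units, hK] at hx
    calc (φ x) ^ (q - 1) = x ^ ((q + 1) * (q - 1)) := by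
          rw [hφ, powMonoidHom_apply, ← pow_mul]
      _ = 1 := by rw [hmul]; exact hx
  have hroots_le : #(univ.filter (fun a : Kˣ => a ^ (q - 1) = 1)) ≤ q - 1 := by
    calc #(univ.filter (fun a : Kˣ => a ^ (q - 1) = 1))
        ≤ Multiset.card (nthRoots (q - 1) ((Units.coeHom K) 1)) :=
          card_nthRoots_subgroup_units (Units.coeHom K) (fun _ _ h => Units.ext h) (by omega) 1
      _ ≤ q - 1 := by rw [map_one]; exact card_nthRoots _ _
  have hrange_card : Nat.card φ.range
      = #(univ.filter (fun a : Kˣ => a ∈ φ.range)) := by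
    rw [show Nat.card φ.range = Nat.card {a : Kˣ // a ∈ φ.range} from rfl]
    exact ncard_filter _
  have hRS : (univ.filter (fun a : Kˣ => a ∈ φ.range))
      ⊆ (univ.filter (fun a : Kˣ => a ^ (q - 1) = 1)) := by
    intro a ha
    simp only [mem_filter, mem_univ, true_and] at ha ⊢
    exact hrange_sub a ha
  have hrange_le : Nat.card φ.range ≤ q - 1 := by
    rw [hrange_card]
    exact le_trans (Finset.card_le_card hRS) hroots_le
  have hprod : Nat.card φ.range * Nat.card φ.ker = q ^ 2 - 1 := by
    rw [← hcard, Subgroup.card_eq_card_quotient_mul_card_subgroup φ.ker]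
    congr 1
    exact (Nat.card_congr (QuotientGroup.quotientKerEquivRange φ).toEquiv).symm
  have hker_eq : Nat.card φ.ker = q + 1 := by
    refine le_antisymm hker_le ?_
    by_contra h
    push_neg at h
    have h2 : Nat.card φ.range * Nat.card φ.ker ≤ (q - 1) * q :=
      Nat.mul_le_mul hrange_le (by omega)
    rw [hprod] at h2
    have h3 : (q - 1) * q = q ^ 2 - q := by
      obtain ⟨r, rfl⟩ : ∃ r, q = r + 2 := ⟨q - 2, by omega⟩
      have h4 : (r + 2) ^ 2 = (r + 2 - 1) * (r + 2) + (r + 2) := by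
        have h1 : r + 2 - 1 = r + 1 := by omega
        rw [h1]; ring
      omega
    omega
  have hrange_eq : Nat.card φ.range = q - 1 := by
    have h := hprod
    rw [hker_eq] at h
    have h2 : Nat.card φ.range * (q + 1) = (q - 1) * (q + 1) := by
      rw [h, ← hmul, Nat.mul_comm]
    exact Nat.eq_of_mul_eq_mul_right (by omega) h2
  -- range is exactly the set of (q-1)-st roots of unity
  have hRS_eq : (univ.filter (fun a : Kˣ => a ∈ φ.range))
      = (univ.filter (fun a : Kˣ => a ^ (q - 1) = 1)) := by
    apply Finset.eq_of_subset_of_card_le hRS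
    rw [← hrange_card] at *
    omega
  refine ⟨?_, ?_, ?_⟩
  · -- card of {x : K // x^(q+1) = 1}
    have e : {x : K // x ^ (q + 1) = 1} ≃ φ.ker := by
      refine ⟨fun x => ⟨Units.mk0 x.1 (fun h => by simpa [h, zero_pow] using x.2), ?_⟩,
        fun u => ⟨((u.1 : Kˣ) : K), ?_⟩, fun x => Subtype.ext rfl, fun u => Subtype.ext (Units.ext rfl)⟩
      · simp only [MonoidHom.mem_ker, hφ, powMonoidHom_apply]
        exact Units.ext (by push_cast; exact x.2)
      · have h := u.2
        simp only [MonoidHom.mem_ker, hφ, powMonoidHom_apply] at h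
        have h2 := congrArg (Units.val) h
        push_cast at h2
        exact h2
    rw [Nat.card_congr e, hker_eq]
  · -- card of F \ {0}
    have e : {a : K // a ≠ 0 ∧ a ^ q = a} ≃ {a : Kˣ // a ^ (q - 1) = 1} := by
      refine ⟨fun a => ⟨Units.mk0 a.1 a.2.1, Units.ext ?_⟩,
        fun u => ⟨((u.1 : Kˣ) : K), Units.ne_zero _, ?_⟩,
        fun a => Subtype.ext rfl, fun u => Subtype.ext (Units.ext rfl)⟩
      · push_cast
        have ha := a.2.1
        have h := a.2.2
        have h2 : a.1 ^ (q - 1) * a.1 = 1 * a.1 := by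
          rw [one_mul, ← pow_succ]
          have h3 : q - 1 + 1 = q := by omega
          rw [h3, h]
        exact mul_right_cancel₀ ha h2
      · have h := u.2
        have h' : (((u.1 : Kˣ) : K)) ^ (q - 1) = 1 := by
          have h2 := congrArg (Units.val) h
          push_cast at h2
          exact h2
        calc ((u.1 : Kˣ) : K) ^ q = ((u.1 : Kˣ) : K) ^ (q - 1 + 1) := by congr 1; omega
          _ = ((u.1 : Kˣ) : K) ^ (q - 1) * ((u.1 : Kˣ) : K) := pow_succ _ _
          _ = ((u.1 : Kˣ) : K) := by rw [h', one_mul]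
    rw [Nat.card_congr e, ncard_filter, ← hRS_eq, ← hrange_card, hrange_eq]
  · -- surjectivity onto nonzero elements of the fixed field
    intro a ha haq
    have hu : (Units.mk0 a ha) ^ (q - 1) = 1 := by
      apply Units.ext
      push_cast
      have h : a ^ (q - 1) * a = 1 * a := by
        rw [one_mul, ← pow_succ]
        have h3 : q - 1 + 1 = q := by omega
        rw [h3, haq]
      exact mul_right_cancel₀ ha h
    have hmem : Units.mk0 a ha ∈ univ.filter (fun a : Kˣ => a ^ (q - 1) = 1) := by
      simp only [mem_filter, mem_univ, true_and]; exact hu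
    rw [← hRS_eq] at hmem
    simp only [mem_filter, mem_univ, true_and] at hmem
    obtain ⟨x, hx⟩ := hmem
    refine ⟨(x : K), ?_⟩
    have h2 := congrArg (Units.val) hx
    rw [hφ, powMonoidHom_apply] at h2
    push_cast at h2
    simpa using h2

end Units


section Count

lemma norm_fixed (hq2 : 2 ≤ q) (hK : Fintype.card K = q ^ 2) (x : K) :
    (x ^ (q + 1)) ^ q = x ^ (q + 1) := by
  have hx : x ^ (q ^ 2) = x := by rw [← hK]; exact FiniteField.pow_card x
  calc (x ^ (q + 1)) ^ q = x ^ (q ^ 2 + q) := by rw [← pow_mul]; congr 1; ring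
    _ = x ^ (q ^ 2) * x ^ q := pow_add x _ _
    _ = x * x ^ q := by rw [hx]
    _ = x ^ (q + 1) := by rw [pow_succ, mul_comm]

lemma card_fiber (hq2 : 2 ≤ q) (hK : Fintype.card K = q ^ 2)
    (a : K) (ha : a ≠ 0) (haq : a ^ q = a) :
    Nat.card {x : K // x ^ (q + 1) = a} = q + 1 := by
  obtain ⟨hker, -, hsurj⟩ := key_units hq2 hK
  obtain ⟨x₀, hx₀⟩ := hsurj a ha haq
  have hx₀ne : x₀ ≠ 0 := fun h => ha (by rw [← hx₀, h, zero_pow (by omega)])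
  have e : {u : K // u ^ (q + 1) = 1} ≃ {x : K // x ^ (q + 1) = a} :=
    { toFun := fun u => ⟨u.1 * x₀, by rw [mul_pow, u.2, one_mul, hx₀]⟩
      invFun := fun x => ⟨x.1 * x₀⁻¹, by
        rw [mul_pow, x.2, inv_pow, hx₀, mul_inv_cancel₀ ha]⟩
      left_inv := fun u => Subtype.ext (by field_simp)
      right_inv := fun x => Subtype.ext (by field_simp) }
  rw [← Nat.card_congr e]
  exact hker

lemma image_norm (hq2 : 2 ≤ q) (hK : Fintype.card K = q ^ 2) [DecidableEq K] :
    (univ : Finset K).image (fun y => y ^ (q + 1))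
      = insert (0 : K) (univ.filter fun a => a ≠ 0 ∧ a ^ q = a) := by
  obtain ⟨-, -, hsurj⟩ := key_units hq2 hK
  ext a
  simp only [mem_image, mem_insert, mem_filter, mem_univ, true_and]
  constructor
  · rintro ⟨y, rfl⟩
    rcases eq_or_ne y 0 with rfl | hy
    · left; exact zero_pow (by omega)
    · right
      exact ⟨pow_ne_zero _ hy, norm_fixed hq2 hK y⟩
  · rintro (rfl | ⟨ha, haq⟩)
    · exact ⟨0, zero_pow (by omega)⟩
    · obtain ⟨x, hx⟩ := hsurj a ha haq
      exact ⟨x, hx⟩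

lemma count [DecidableEq K] (hq2 : 2 ≤ q) (hK : Fintype.card K = q ^ 2)
    (hfrob : ∀ x y : K, (x + y) ^ q = x ^ q + y ^ q)
    (m : ℕ) (c : K) (hc : c ^ q = c) :
    (Nat.card {x : Fin m → K // ∑ i, x i ^ (q + 1) = c} : ℚ)
      = if c = 0 then (NM (q : ℚ) m).1 else (NM (q : ℚ) m).2 := by
  induction m generalizing c with
  | zero =>
    rcases eq_or_ne c 0 with rfl | hc0
    · rw [if_pos rfl]
      have h : ∀ x : Fin 0 → K, ∑ i, x i ^ (q + 1) = (0 : K) := fun x => by simp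
      rw [Nat.card_congr (Equiv.subtypeUnivEquiv h), Nat.card_eq_fintype_card]
      simp [NM]
    · rw [if_neg hc0]
      have h : IsEmpty {x : Fin 0 → K // ∑ i, x i ^ (q + 1) = c} :=
        ⟨fun x => hc0 (by simpa using x.2.symm)⟩
      rw [Nat.card_of_isEmpty]
      simp [NM]
  | succ m ih =>
    have e : {x : Fin (m + 1) → K // ∑ i, x i ^ (q + 1) = c}
        ≃ Σ y : K, {z : Fin m → K // ∑ i, z i ^ (q + 1) = c - y ^ (q + 1)} :=
      { toFun := fun x => ⟨x.1 0, Fin.tail x.1, by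
          have h := x.2
          rw [Fin.sum_univ_succ] at h
          simp only [Fin.tail]
          exact eq_sub_of_add_eq' h⟩
        invFun := fun yz => ⟨Fin.cons yz.1 yz.2.1, by
          rw [Fin.sum_univ_succ]
          simp only [Fin.cons_zero, Fin.cons_succ]
          rw [yz.2.2]
          ring⟩
        left_inv := fun x => Subtype.ext (Fin.cons_self_tail x.1)
        right_inv := fun yz => rfl }
    rw [Nat.card_congr e]
    have hsig : Nat.card (Σ y : K, {z : Fin m → K // ∑ i, z i ^ (q + 1) = c - y ^ (q + 1)})
        = ∑ y : K, Nat.card {z : Fin m → K // ∑ i, z i ^ (q + 1) = c - y ^ (q + 1)} := by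
      rw [Nat.card_eq_fintype_card, Fintype.card_sigma]
      exact Finset.sum_congr rfl fun y _ => (Nat.card_eq_fintype_card).symm
    rw [hsig]
    push_cast
    have hsub : ∀ x y : K, (x - y) ^ q = x ^ q - y ^ q := frob_sub hfrob (le_trans one_le_two hq2)
    have hsummand : ∀ y ∈ (univ : Finset K),
        (Nat.card {z : Fin m → K // ∑ i, z i ^ (q + 1) = c - y ^ (q + 1)} : ℚ)
          = if c - y ^ (q + 1) = 0 then (NM (q : ℚ) m).1 else (NM (q : ℚ) m).2 := by
      intro y _
      exact ih _ (by rw [hsub, hc, norm_fixed hq2 hK y])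
    rw [Finset.sum_congr rfl hsummand]
    have hcomp := Finset.sum_comp (s := (univ : Finset K))
      (fun a : K => if c - a = 0 then (NM (q : ℚ) m).1 else (NM (q : ℚ) m).2)
      (fun y : K => y ^ (q + 1))
    rw [hcomp, image_norm hq2 hK, Finset.sum_insert (by simp)]
    have h0 : #(univ.filter fun y : K => y ^ (q + 1) = (0 : K)) = 1 := by
      have h1 : (univ.filter fun y : K => y ^ (q + 1) = (0 : K)) = {0} := by
        ext y
        simp [pow_eq_zero_iff, Nat.succ_ne_zero q]
      rw [h1, card_singleton]
    have hFs : #(univ.filter fun a : K => a ≠ 0 ∧ a ^ q = a) = q - 1 := by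
      rw [← ncard_filter]
      exact (key_units hq2 hK).2.1
    have hfib : ∀ a ∈ (univ.filter fun a : K => a ≠ 0 ∧ a ^ q = a),
        #(univ.filter fun y : K => y ^ (q + 1) = a) = q + 1 := by
      intro a ha
      simp only [mem_filter, mem_univ, true_and] at ha
      rw [← ncard_filter]
      exact card_fiber hq2 hK a ha.1 ha.2
    have hcast1 : ((q - 1 : ℕ) : ℚ) = (q : ℚ) - 1 := by
      rw [Nat.cast_sub (le_trans one_le_two hq2)]; norm_num
    rcases eq_or_ne c 0 with rfl | hc0
    · rw [if_pos rfl, h0]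
      have hsum : ∑ a ∈ (univ.filter fun a : K => a ≠ 0 ∧ a ^ q = a),
          (#(univ.filter fun y : K => y ^ (q + 1) = a)) •
            (if (0 : K) - a = 0 then (NM (q : ℚ) m).1 else (NM (q : ℚ) m).2)
          = ∑ _a ∈ (univ.filter fun a : K => a ≠ 0 ∧ a ^ q = a),
              (q + 1) • (NM (q : ℚ) m).2 := by
        apply Finset.sum_congr rfl
        intro a ha
        rw [hfib a ha]
        simp only [mem_filter, mem_univ, true_and] at ha
        rw [if_neg (show (0:K) - a ≠ 0 by simpa using ha.1)]
      rw [hsum, Finset.sum_const, hFs]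
      simp only [sub_zero, if_pos rfl, one_smul, smul_smul, nsmul_eq_mul]
      rw [hcast1]
      simp only [NM]
      push_cast
      ring
    · rw [if_neg hc0]
      have hcFs : c ∈ (univ.filter fun a : K => a ≠ 0 ∧ a ^ q = a) := by
        simp only [mem_filter, mem_univ, true_and]
        exact ⟨hc0, hc⟩
      rw [← Finset.add_sum_erase _ _ hcFs, hfib c hcFs, h0]
      have herase : ∑ a ∈ (univ.filter fun a : K => a ≠ 0 ∧ a ^ q = a).erase c,
          (#(univ.filter fun y : K => y ^ (q + 1) = a)) •
            (if c - a = 0 then (NM (q : ℚ) m).1 else (NM (q : ℚ) m).2)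
          = ∑ _a ∈ (univ.filter fun a : K => a ≠ 0 ∧ a ^ q = a).erase c,
              (q + 1) • (NM (q : ℚ) m).2 := by
        apply Finset.sum_congr rfl
        intro a ha
        rw [hfib a (Finset.mem_of_mem_erase ha)]
        have hane : a ≠ c := Finset.ne_of_mem_erase ha
        rw [if_neg (by simpa [sub_eq_zero] using fun h => hane h.symm)]
      rw [herase, Finset.sum_const, Finset.card_erase_of_mem hcFs, hFs]
      have hcast2 : ((q - 1 - 1 : ℕ) : ℚ) = (q : ℚ) - 2 := by
        have h : q - 1 - 1 = q - 2 := Nat.sub_sub q 1 1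
        rw [h, Nat.cast_sub hq2]; norm_num
      simp only [sub_self, if_pos rfl, sub_zero, if_neg hc0, one_smul, smul_smul, nsmul_eq_mul]
      rw [hcast2]
      simp only [NM]
      push_cast
      ring

end Count

section Projective

lemma smul_sum_zero {n : ℕ} (a : Kˣ) (v : Fin (n + 1) → K)
    (hv : ∑ i, v i ^ (q + 1) = 0) : ∑ i, (a • v) i ^ (q + 1) = 0 := by
  have h : ∀ i, (a • v) i = (a : K) * v i := fun i => rfl
  simp only [h, mul_pow, ← Finset.mul_sum, hv, mul_zero]

lemma proj_card [DecidableEq K] (hq2 : 2 ≤ q) (hK : Fintype.card K = q ^ 2) (n : ℕ) :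
    Nat.card {v : Fin (n + 1) → K // ∑ i, v i ^ (q + 1) = 0}
      = Nat.card {x : Projectivization K (Fin (n + 1) → K) //
          ∑ i : Fin (n + 1), x.rep i ^ (q + 1) = 0} * (q ^ 2 - 1) + 1 := by
  classical
  set f : {x : Projectivization K (Fin (n + 1) → K) //
      ∑ i : Fin (n + 1), x.rep i ^ (q + 1) = 0} × Kˣ
      → {v : Fin (n + 1) → K // (∑ i, v i ^ (q + 1) = 0) ∧ v ≠ 0} :=
    fun p => ⟨p.2 • p.1.1.rep, smul_sum_zero p.2 _ p.1.2, fun h0 => p.1.1.rep_nonzero (by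
      have h := congrArg (fun w => (p.2⁻¹ : Kˣ) • w) h0
      simpa [smul_smul] using h)⟩ with hf
  have hbij : Function.Bijective f := by
    constructor
    · rintro ⟨⟨x, hx⟩, a⟩ ⟨⟨y, hy⟩, b⟩ h
      simp only [hf, Subtype.mk.injEq] at h
      have hxy : x = y := by
        rw [← Projectivization.mk_rep x, ← Projectivization.mk_rep y,
          Projectivization.mk_eq_mk_iff]
        exact ⟨a⁻¹ * b, by rw [mul_smul, ← h, inv_smul_smul]⟩
      subst hxy
      have hab : a = b := by
        obtain ⟨i, hi⟩ : ∃ i, x.rep i ≠ 0 := Function.ne_iff.mp x.rep_nonzero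
        have h2 := congrFun h i
        simp only [Units.smul_def, Pi.smul_apply, smul_eq_mul] at h2
        exact Units.ext (mul_right_cancel₀ hi h2)
      subst hab
      rfl
    · rintro ⟨v, hPv, hv⟩
      set x := Projectivization.mk K v hv with hxdef
      have hxv : Projectivization.mk K x.rep x.rep_nonzero = Projectivization.mk K v hv :=
        by rw [Projectivization.mk_rep]
      obtain ⟨a, ha⟩ := (Projectivization.mk_eq_mk_iff K _ _ _ _).mp hxv
      have hx : ∑ i : Fin (n + 1), x.rep i ^ (q + 1) = 0 := by
        rw [← ha]; exact smul_sum_zero a v hPv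
      refine ⟨⟨⟨x, hx⟩, a⁻¹⟩, ?_⟩
      apply Subtype.ext
      show a⁻¹ • x.rep = v
      rw [← ha, inv_smul_smul]
  have h1 : Nat.card {v : Fin (n + 1) → K // (∑ i, v i ^ (q + 1) = 0) ∧ v ≠ 0}
      = Nat.card {x : Projectivization K (Fin (n + 1) → K) //
          ∑ i : Fin (n + 1), x.rep i ^ (q + 1) = 0} * (q ^ 2 - 1) := by
    rw [← Nat.card_eq_of_bijective f hbij, Nat.card_prod, card_units' hK]
  have hP0 : ∑ i : Fin (n + 1), (0 : Fin (n + 1) → K) i ^ (q + 1) = 0 := by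
    simp [zero_pow, Nat.succ_ne_zero q]
  have h2 : (univ.filter fun v : Fin (n + 1) → K => ∑ i, v i ^ (q + 1) = 0)
      = insert (0 : Fin (n + 1) → K)
          (univ.filter fun v => (∑ i, v i ^ (q + 1) = 0) ∧ v ≠ 0) := by
    ext v
    simp only [mem_filter, mem_univ, true_and, mem_insert]
    constructor
    · intro h
      by_cases hv : v = 0
      · exact Or.inl hv
      · exact Or.inr ⟨h, hv⟩
    · rintro (rfl | ⟨h, -⟩)
      · exact hP0
      · exact h
  rw [ncard_filter, h2, card_insert_of_notMem (by simp), ← ncard_filter, h1]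

end Projective

end HermAux

/-- The number of rational points of the non-degenerate Hermitian variety
`U_n = V(x_0^{q+1} + ... + x_n^{q+1}) ⊆ ℙ^n(F_{q²})`. -/
theorem stmt0 (q n : ℕ) (hq : IsPrimePow q) (hn : 1 ≤ n)
    (K : Type) [Field K] [Fintype K] (hK : Fintype.card K = q ^ 2) :
    (Nat.card {x : Projectivization K (Fin (n + 1) → K) //
        ∑ i : Fin (n + 1), x.rep i ^ (q + 1) = 0} : ℚ) =
      ((q : ℚ) ^ n - (-1) ^ n) * ((q : ℚ) ^ (n + 1) - (-1) ^ (n + 1)) / ((q : ℚ) ^ 2 - 1) := by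
  classical
  have hq2 : 2 ≤ q := hq.two_le
  have hfrob := HermAux.frob_add hq hK
  have hz : (0 : K) ^ q = 0 := zero_pow (by omega)
  have hcount := HermAux.count hq2 hK hfrob (n + 1) 0 hz
  rw [if_pos rfl] at hcount
  have hproj := HermAux.proj_card hq2 hK n
  have hq2' : (2 : ℚ) ≤ (q : ℚ) := by exact_mod_cast hq2
  have hq0 : (q : ℚ) ≠ 0 := by nlinarith
  have hne : (q : ℚ) ^ 2 - 1 ≠ 0 := by nlinarith
  have hc1 : ((q ^ 2 - 1 : ℕ) : ℚ) = (q : ℚ) ^ 2 - 1 := by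
    rw [Nat.cast_sub (by nlinarith : 1 ≤ q ^ 2)]
    push_cast
    ring
  have heq1 : (Nat.card {x : Projectivization K (Fin (n + 1) → K) //
        ∑ i : Fin (n + 1), x.rep i ^ (q + 1) = 0} : ℚ) * ((q : ℚ) ^ 2 - 1) + 1
      = (HermAux.NM (q : ℚ) (n + 1)).1 := by
    rw [← hcount, hproj]
    push_cast [hc1]
    ring
  obtain ⟨hN, -⟩ := HermAux.NM_closed (q : ℚ) (n + 1)
  rw [eq_div_iff hne]
  apply mul_left_cancel₀ hq0
  have hs : ((-1 : ℚ)) ^ n * (-1 : ℚ) ^ n = 1 := by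
    rw [← pow_add]
    exact Even.neg_one_pow ⟨n, rfl⟩
  linear_combination (q : ℚ) * heq1 + hN + (q : ℚ) * hs
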